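/- Let F be a nonsingular unsatisfiable hitting clause-set with δ(F) = k, where k ≥ 2, and suppose F is strictly fs-resolvable. If N ∈ ℕ is such that every nonsingular unsatisfiable hitting clause-set G with δ(G) = k − 1 satisfies n(G) ≤ N, then n(F) ≤ N + 3. -/

import Mathlib

/-- A clause-set: a finite set of finite sets of integers. -/
abbrev Cls := Finset (Finset ℤ)

/-- A clause: a finite set of nonzero integers, clash-free. -/
def IsClause (C : Finset ℤ) : Prop := (0 : ℤ) ∉ C ∧ ∀ x ∈ C, -x ∉ C

/-- All members are clauses. -/
def IsClauseSet (F : Cls) : Prop := ∀ C ∈ F, IsClause C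

/-- Satisfiability: some clause (partial assignment) meets every clause of `F`. -/
def Sat (F : Cls) : Prop := ∃ S : Finset ℤ, IsClause S ∧ ∀ D ∈ F, (S ∩ D).Nonempty

/-- Hitting: any two distinct clauses clash. -/
def Hitting (F : Cls) : Prop := ∀ C ∈ F, ∀ D ∈ F, C ≠ D → ∃ x ∈ C, -x ∈ D

/-- Unsatisfiable hitting clause-set. -/
def UHit (F : Cls) : Prop := IsClauseSet F ∧ Hitting F ∧ ¬ Sat F

/-- The variables of a clause-set (as absolute values of its literals). -/
def cvar (F : Cls) : Finset ℤ := F.sup (fun C => C.image (fun x => |x|))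

/-- Number of variables. -/
def nvar (F : Cls) : ℕ := (cvar F).card

/-- Deficiency: number of clauses minus number of variables. -/
def deficiency (F : Cls) : ℤ := (F.card : ℤ) - (nvar F : ℤ)

/-- Literal degree. -/
def ldeg (F : Cls) (x : ℤ) : ℕ := (F.filter (fun C => x ∈ C)).card

/-- Variable degree. -/
def vdeg (F : Cls) (v : ℤ) : ℕ := ldeg F v + ldeg F (-v)

/-- Singular variable. -/
def SingularVar (F : Cls) (v : ℤ) : Prop :=
  v ∈ cvar F ∧ min (ldeg F v) (ldeg F (-v)) = 1

/-- Nonsingular clause-set. -/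
def Nonsingular (F : Cls) : Prop := ∀ v, ¬ SingularVar F v

/-- Number of singular variables. -/
def nsv (F : Cls) : ℕ :=
  ((cvar F).filter (fun v => min (ldeg F v) (ldeg F (-v)) = 1)).card

/-- Number of 1-singular variables. -/
def nosv (F : Cls) : ℕ :=
  ((cvar F).filter (fun v => min (ldeg F v) (ldeg F (-v)) = 1 ∧ vdeg F v = 2)).card

/-- Number of singular, non-1-singular variables. -/
def nnosv (F : Cls) : ℕ :=
  ((cvar F).filter (fun v => min (ldeg F v) (ldeg F (-v)) = 1 ∧ vdeg F v ≠ 2)).card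

/-- Full subsumption pair: `{E ∪ {x}, E ∪ {-x}}`. -/
def IsFsPair (P : Cls) : Prop :=
  ∃ (E : Finset ℤ) (x : ℤ), IsClause E ∧ x ≠ 0 ∧ x ∉ E ∧ -x ∉ E ∧
    P = {insert x E, insert (-x) E}

/-- Strict fs-resolvability: an fs-pair whose resolvent is not in `F`, and whose
resolution variable occurs in the rest of `F`. -/
def StrictlyFsResolvable (F : Cls) : Prop :=
  ∃ (E : Finset ℤ) (x : ℤ), IsClause E ∧ x ≠ 0 ∧ x ∉ E ∧ -x ∉ E ∧
    insert x E ∈ F ∧ insert (-x) E ∈ F ∧ E ∉ F ∧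
    |x| ∈ cvar (F \ {insert x E, insert (-x) E})

/-- `F'` is an nfs-flip of `F`: an nfs-pair `{E ∪ {x}, E ∪ {-x,y}} ⊆ F` is replaced
by its flipped pair `{E ∪ {x,-y}, E ∪ {y}}`, which must not intersect `F`. -/
def NfsFlip (F F' : Cls) : Prop :=
  ∃ (E : Finset ℤ) (x y : ℤ), IsClause E ∧ x ≠ 0 ∧ y ≠ 0 ∧ |x| ≠ |y| ∧
    x ∉ E ∧ -x ∉ E ∧ y ∉ E ∧ -y ∉ E ∧
    insert x E ∈ F ∧ insert y (insert (-x) E) ∈ F ∧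
    insert (-y) (insert x E) ∉ F ∧ insert y E ∉ F ∧
    F' = (F \ {insert x E, insert y (insert (-x) E)}) ∪
         {insert (-y) (insert x E), insert y E}

/-- Intersection of all clauses of `F` (for nonempty `F`). -/
def bigInter (F : Cls) : Finset ℤ := (F.sup id).filter (fun x => ∀ C ∈ F, x ∈ C)

/-- Clause-factor: a nonempty `F' ⊆ F` whose residue is unsatisfiable. -/
def ClauseFactor (F F' : Cls) : Prop :=
  F'.Nonempty ∧ F' ⊆ F ∧ ¬ Sat (F'.image (fun E => E \ bigInter F'))

/-- A clause-factor is trivial if it has one clause, or is unsatisfiable and all of `F`. -/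
def TrivialFactor (F F' : Cls) : Prop := F'.card = 1 ∨ (¬ Sat F' ∧ F' = F)

/-- Clause-irreducible: every clause-factor is trivial. -/
def ClauseIrreducible (F : Cls) : Prop := ∀ F', ClauseFactor F F' → TrivialFactor F F'

/-- DP-reduction (variable elimination) on variable `v`. -/
def dp (v : ℤ) (F : Cls) : Cls :=
  ((F ×ˢ F).filter (fun p => p.1 ∩ p.2.image (fun x => -x) = {v})).image
    (fun p => (p.1 ∪ p.2) \ {v, -v}) ∪
  F.filter (fun C => v ∉ C ∧ -v ∉ C)

/-- `x` (or `-x`) occurs in a clause of `F`. -/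
def LitIn (F : Cls) (x : ℤ) : Prop := ∃ C ∈ F, x ∈ C ∨ -x ∈ C

/-- Isomorphism of clause-sets. -/
def Iso (F G : Cls) : Prop :=
  ∃ f : ℤ → ℤ, (∀ x, f (-x) = - f x) ∧
    (∀ x y, LitIn F x → LitIn F y → f x = f y → x = y) ∧
    G = F.image (fun C => C.image f)

/-- The clause-set D3. -/
def D3 : Cls := {({1,2,3} : Finset ℤ), {-1,-2,-3}, {-1,2}, {-2,3}, {-3,1}}

/-- Logical equivalence of clause-sets. -/
def LogEquiv (F G : Cls) : Prop :=
  ∀ S : Finset ℤ, IsClause S →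
    ((∀ D ∈ F, (S ∩ D).Nonempty) ↔ (∀ D ∈ G, (S ∩ D).Nonempty))
open Finset

lemma mem_cvar_iff {F : Cls} {w : ℤ} : w ∈ cvar F ↔ ∃ C ∈ F, ∃ z ∈ C, |z| = w := by
  simp [cvar, Finset.mem_sup, Finset.mem_image]

lemma abs_mem_cvar {F : Cls} {C : Finset ℤ} {z : ℤ} (hC : C ∈ F) (hz : z ∈ C) :
    |z| ∈ cvar F := mem_cvar_iff.mpr ⟨C, hC, z, hz, rfl⟩

lemma cvar_pos {F : Cls} (hF : IsClauseSet F) {w : ℤ} (hw : w ∈ cvar F) : 0 < w := by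
  obtain ⟨C, hC, z, hz, rfl⟩ := mem_cvar_iff.mp hw
  have h0 : z ≠ 0 := fun h => (hF C hC).1 (h ▸ hz)
  exact abs_pos.mpr h0

lemma ldeg_pos {F : Cls} {z : ℤ} {C : Finset ℤ} (hC : C ∈ F) (hz : z ∈ C) :
    1 ≤ ldeg F z := by
  have : C ∈ F.filter (fun C => z ∈ C) := mem_filter.mpr ⟨hC, hz⟩
  exact Nat.one_le_iff_ne_zero.mpr (fun h => by simp [ldeg, Finset.card_eq_zero] at h; simp at this; exact h this.1 this.2)

lemma exists_of_ldeg_pos {F : Cls} {z : ℤ} (h : 1 ≤ ldeg F z) : ∃ C ∈ F, z ∈ C := by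
  obtain ⟨C, hC⟩ := Finset.card_pos.mp h
  exact ⟨C, (mem_filter.mp hC).1, (mem_filter.mp hC).2⟩

lemma unique_of_ldeg_one {F : Cls} {v : ℤ} (h1 : ldeg F v = 1) {C D : Finset ℤ}
    (hC : C ∈ F) (hv : v ∈ C) (hD : D ∈ F) (hv' : v ∈ D) : C = D := by
  have := Finset.card_le_one.mp (le_of_eq h1)
  exact this C (mem_filter.mpr ⟨hC, hv⟩) D (mem_filter.mpr ⟨hD, hv'⟩)

lemma min_ldeg_abs (F : Cls) (a : ℤ) :
    min (ldeg F |a|) (ldeg F (-|a|)) = min (ldeg F a) (ldeg F (-a)) := by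
  rcases abs_cases a with ⟨h, _⟩ | ⟨h, _⟩
  · rw [h]
  · rw [h, neg_neg, min_comm]

lemma clause_subset {S T : Finset ℤ} (hS : IsClause S) (hT : T ⊆ S) : IsClause T :=
  ⟨fun h => hS.1 (hT h), fun x hx hnx => hS.2 x (hT hx) (hT hnx)⟩

/-- Existence of a falsified clause for a total assignment. -/
lemma exists_falsified {F : Cls} (hU : UHit F) {S : Finset ℤ} (hS : IsClause S)
    (htot : ∀ w ∈ cvar F, w ∈ S ∨ -w ∈ S) : ∃ D ∈ F, ∀ z ∈ D, -z ∈ S := by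
  by_contra h
  push_neg at h
  exact hU.2.2 ⟨S, hS, fun D hD => by
    obtain ⟨z, hzD, hz⟩ := h D hD
    have hw := htot |z| (abs_mem_cvar hD hzD)
    rcases abs_cases z with ⟨ha, _⟩ | ⟨ha, _⟩
    · rw [ha] at hw
      rcases hw with hw | hw
      · exact ⟨z, Finset.mem_inter.mpr ⟨hw, hzD⟩⟩
      · exact absurd hw hz
    · rw [ha, neg_neg] at hw
      rcases hw with hw | hw
      · exact absurd hw hz
      · exact ⟨z, Finset.mem_inter.mpr ⟨hw, hzD⟩⟩⟩

/-- Uniqueness of the falsified clause. -/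
lemma falsified_unique {F : Cls} (hU : UHit F) {S : Finset ℤ} (hS : IsClause S)
    {D E : Finset ℤ} (hD : D ∈ F) (hE : E ∈ F) (hfD : ∀ z ∈ D, -z ∈ S)
    (hfE : ∀ z ∈ E, -z ∈ S) : D = E := by
  by_contra hne
  obtain ⟨z, hzD, hzE⟩ := hU.2.1 D hD E hE hne
  have h1 : -z ∈ S := hfD z hzD
  have h2 : z ∈ S := by have := hfE (-z) hzE; rwa [neg_neg] at this
  exact hS.2 z h2 h1

/-- Totalize a consistent set of "false" literals into a total assignment. -/
lemma totalize (F : Cls) (hF : IsClauseSet F) (L : Finset ℤ) (h0 : (0:ℤ) ∉ L)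
    (hc : ∀ z ∈ L, -z ∉ L) :
    ∃ S : Finset ℤ, IsClause S ∧ (∀ w ∈ cvar F, w ∈ S ∨ -w ∈ S) ∧ (∀ z ∈ L, -z ∈ S) := by
  refine ⟨L.image (fun z => -z) ∪ ((cvar F) \ L.image abs), ?_, ?_, ?_⟩
  · constructor
    · intro h
      rcases Finset.mem_union.mp h with h | h
      · obtain ⟨z, hz, hz0⟩ := Finset.mem_image.mp h
        have : z = 0 := by linarith
        exact h0 (this ▸ hz)
      · exact absurd (cvar_pos hF (Finset.mem_sdiff.mp h).1) (by norm_num)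
    · intro x hx hnx
      rcases Finset.mem_union.mp hx with h | h
      · obtain ⟨z, hz, rfl⟩ := Finset.mem_image.mp h
        rw [neg_neg] at hnx
        rcases Finset.mem_union.mp hnx with h' | h'
        · obtain ⟨z', hz', hz''⟩ := Finset.mem_image.mp h'
          have : z' = -z := by linarith
          exact hc z hz (this ▸ hz')
        · have hpos := cvar_pos hF (Finset.mem_sdiff.mp h').1
          exact (Finset.mem_sdiff.mp h').2 (Finset.mem_image.mpr ⟨z, hz, abs_of_pos hpos⟩)
      · have hxpos := cvar_pos hF (Finset.mem_sdiff.mp h).1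
        rcases Finset.mem_union.mp hnx with h' | h'
        · obtain ⟨z, hz, hz'⟩ := Finset.mem_image.mp h'
          have hzx : z = x := by linarith
          exact (Finset.mem_sdiff.mp h).2 (Finset.mem_image.mpr ⟨z, hz, by
            rw [hzx]; exact abs_of_pos hxpos⟩)
        · have := cvar_pos hF (Finset.mem_sdiff.mp h').1
          linarith
  · intro w hw
    by_cases h : w ∈ L.image abs
    · obtain ⟨z, hz, hz'⟩ := Finset.mem_image.mp h
      have hmem : -z ∈ L.image (fun z => -z) := Finset.mem_image.mpr ⟨z, hz, rfl⟩
      rcases abs_cases z with ⟨ha, _⟩ | ⟨ha, _⟩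
      · right
        rw [← hz', ha]
        exact Finset.mem_union_left _ hmem
      · left
        rw [← hz', ha]
        exact Finset.mem_union_left _ hmem
    · left
      exact Finset.mem_union_right _ (Finset.mem_sdiff.mpr ⟨hw, h⟩)
  · intro z hz
    exact Finset.mem_union_left _ (Finset.mem_image.mpr ⟨z, hz, rfl⟩)

/-- Flipping one literal of a total assignment. -/
lemma flipAssign {S : Finset ℤ} (hS : IsClause S) {v : ℤ} (hv : v ∈ S) :
    IsClause (insert (-v) (S.erase v)) ∧ (-v) ∈ insert (-v) (S.erase v) ∧
    v ∉ insert (-v) (S.erase v) ∧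
    (∀ z, z ≠ v → z ≠ -v → (z ∈ insert (-v) (S.erase v) ↔ z ∈ S)) ∧
    (∀ w, (w ∈ S ∨ -w ∈ S) → (w ∈ insert (-v) (S.erase v) ∨ -w ∈ insert (-v) (S.erase v))) := by
  have hv0 : v ≠ 0 := fun h => hS.1 (h ▸ hv)
  have hvS : -v ∉ S := hS.2 v hv
  have hmemS' : ∀ z, z ∈ insert (-v) (S.erase v) ↔ (z = -v ∨ (z ∈ S ∧ z ≠ v)) := by
    intro z
    simp [Finset.mem_insert, Finset.mem_erase, and_comm]
  refine ⟨⟨?_, ?_⟩, Finset.mem_insert_self _ _, ?_, ?_, ?_⟩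
  · intro h
    rcases (hmemS' 0).mp h with h | ⟨h, _⟩
    · exact hv0 (by linarith)
    · exact hS.1 h
  · intro x hx hnx
    rcases (hmemS' x).mp hx with h | ⟨h, hne⟩
    · rcases (hmemS' (-x)).mp hnx with h' | ⟨h', hne'⟩
      · rw [h] at h'; exact hv0 (by linarith)
      · exact hne' (by rw [h, neg_neg])
    · rcases (hmemS' (-x)).mp hnx with h' | ⟨h', _⟩
      · exact hne (by linarith)
      · exact hS.2 x h h'
  · intro h
    rcases (hmemS' v).mp h with h | ⟨_, hne⟩
    · exact hv0 (by linarith)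
    · exact hne rfl
  · intro z hz hz'
    rw [hmemS' z]
    constructor
    · rintro (h | ⟨h, _⟩)
      · exact absurd h hz'
      · exact h
    · intro h
      exact Or.inr ⟨h, hz⟩
  · intro w hw
    by_cases h1 : w = v
    · right; rw [h1]; exact Finset.mem_insert_self _ _
    · by_cases h2 : w = -v
      · left; rw [h2]; exact Finset.mem_insert_self _ _
      · rcases hw with h | h
        · left; rw [hmemS' w]; exact Or.inr ⟨h, h1⟩
        · right; rw [hmemS' (-w)]
          exact Or.inr ⟨h, fun hc => h2 (by linarith)⟩

/-- No pure literals in a UHIT. -/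
lemma nopure {F : Cls} (hU : UHit F) {C : Finset ℤ} {z : ℤ} (hC : C ∈ F) (hz : z ∈ C) :
    1 ≤ ldeg F (-z) := by
  by_contra h
  have hpure : ∀ D ∈ F, -z ∉ D := fun D hD hzD => h (ldeg_pos hD hzD)
  have hCl := hU.1 C hC
  obtain ⟨S, hS, htot, hfall⟩ := totalize F hU.1 C hCl.1 hCl.2
  have hnzS : -z ∈ S := hfall z hz
  set S' := insert (- -z) (S.erase (-z)) with hS'def
  obtain ⟨hS', hmem1, hmem2, hiff, htot'⟩ := flipAssign hS hnzS
  obtain ⟨E, hE, hfE⟩ := exists_falsified hU hS' (fun w hw => htot' w (htot w hw))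
  have hzE : z ∉ E := by
    intro hzE
    have h1 := hfE z hzE
    exact hmem2 h1
  have hnzE : -z ∉ E := hpure E hE
  have hfES : ∀ y ∈ E, -y ∈ S := by
    intro y hy
    have hy1 : -y ≠ -z := by
      intro hc
      have : y = z := by linarith
      exact hzE (this ▸ hy)
    have hy2 : -y ≠ - -z := by
      intro hc
      have : y = -z := by linarith
      exact hnzE (this ▸ hy)
    exact (hiff (-y) hy1 hy2).mp (hfE y hy)
  have : C = E := falsified_unique hU hS hC hE hfall hfES
  exact hzE (this ▸ hz)

/-- Key clash lemma: if `ldeg F v = 1` with `v ∈ C`, any `D ∋ -v` clashes `C` only at `v`. -/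
lemma keyclash {F : Cls} (hU : UHit F) {v : ℤ} {C D : Finset ℤ} (hC : C ∈ F) (hvC : v ∈ C)
    (h1 : ldeg F v = 1) (hD : D ∈ F) (hvD : -v ∈ D) {a : ℤ} (haC : a ∈ C) (haD : -a ∈ D) :
    a = v := by
  by_contra hav
  have hCl := hU.1 C hC
  have hDl := hU.1 D hD
  set NC := C.filter (fun z => -z ∉ D) with hNC
  set L := D ∪ NC with hL
  have hL0 : (0:ℤ) ∉ L := by
    intro h
    rcases Finset.mem_union.mp h with h | h
    · exact hDl.1 h
    · exact hCl.1 (Finset.mem_filter.mp h).1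
  have hLc : ∀ z ∈ L, -z ∉ L := by
    intro z hz hnz
    rcases Finset.mem_union.mp hz with h | h <;> rcases Finset.mem_union.mp hnz with h' | h'
    · exact hDl.2 z h h'
    · obtain ⟨hzC, hznD⟩ := Finset.mem_filter.mp h'
      rw [neg_neg] at hznD
      exact hznD h
    · exact (Finset.mem_filter.mp h).2 h'
    · exact hCl.2 _ (Finset.mem_filter.mp h).1 (Finset.mem_filter.mp h').1
  obtain ⟨S, hS, htot, hfall⟩ := totalize F hU.1 L hL0 hLc
  have hvS : v ∈ S := by
    have := hfall (-v) (Finset.mem_union_left _ hvD)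
    rwa [neg_neg] at this
  have haS : a ∈ S := by
    have := hfall (-a) (Finset.mem_union_left _ haD)
    rwa [neg_neg] at this
  set S' := insert (-v) (S.erase v) with hS'def
  obtain ⟨hS', hmem1, hmem2, hiff, htot'⟩ := flipAssign hS hvS
  obtain ⟨E, hE, hfE⟩ := exists_falsified hU hS' (fun w hw => htot' w (htot w hw))
  have hanv : a ≠ -v := fun h => hCl.2 v hvC (h ▸ haC)
  have haS' : a ∈ S' := (hiff a hav hanv).mpr haS
  have hvE : v ∉ E := by
    intro hvE
    have hEC : C = E := unique_of_ldeg_one h1 hC hvC hE hvE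
    exact hS'.2 a haS' (hfE a (hEC ▸ haC))
  have hnvE : -v ∉ E := by
    intro hnvE
    have h2 := hfE (-v) hnvE
    rw [neg_neg] at h2
    exact hmem2 h2
  have hfES : ∀ y ∈ E, -y ∈ S := by
    intro y hy
    have hy2 : -y ≠ v := by
      intro hc
      have : y = -v := by linarith
      exact hnvE (this ▸ hy)
    have hy3 : -y ≠ -v := by
      intro hc
      have : y = v := by linarith
      exact hvE (this ▸ hy)
    exact (hiff (-y) hy2 hy3).mp (hfE y hy)
  have hfDS : ∀ y ∈ D, -y ∈ S := fun y hy => hfall y (Finset.mem_union_left _ hy)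
  have hDE : D = E := falsified_unique hU hS hD hE hfDS hfES
  exact hnvE (hDE ▸ hvD)

/-- In a UHIT, a nonsingular variable has both literal degrees at least 2. -/
lemma nonsing_two {F : Cls} (hU : UHit F) {a : ℤ} (hns : ¬ SingularVar F |a|)
    (hcv : |a| ∈ cvar F) : 2 ≤ ldeg F a ∧ 2 ≤ ldeg F (-a) := by
  obtain ⟨C, hC, z, hz, hza⟩ := mem_cvar_iff.mp hcv
  have h1 : 1 ≤ ldeg F z := ldeg_pos hC hz
  have h2 : 1 ≤ ldeg F (-z) := nopure hU hC hz
  have hmin : min (ldeg F a) (ldeg F (-a)) ≠ 1 := by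
    intro hm
    exact hns ⟨hcv, by rw [min_ldeg_abs]; exact hm⟩
  have hz' : z = a ∨ z = -a := abs_eq_abs.mp hza
  have hboth : 1 ≤ ldeg F a ∧ 1 ≤ ldeg F (-a) := by
    rcases hz' with rfl | rfl
    · exact ⟨h1, h2⟩
    · constructor
      · rwa [neg_neg] at h2
      · exact h1
  omega

/-- Singular DP reduction step on a UHIT. -/
lemma sdp (F : Cls) (hU : UHit F) (v : ℤ) (C : Finset ℤ) (hC : C ∈ F) (hvC : v ∈ C)
    (h1 : ldeg F v = 1) :
    ∃ F2 : Cls, UHit F2 ∧ cvar F2 = (cvar F).erase |v| ∧ F2.card + 1 = F.card ∧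
      (∀ a, a ≠ v → a ≠ -v → a ∈ C → ldeg F (-v) ≤ ldeg F2 a) ∧
      (∀ a, a ≠ -v → a ∉ C → ldeg F a ≤ ldeg F2 a) ∧
      (∀ D ∈ F, -v ∈ D → (C ∪ D) \ {v, -v} ∈ F2) := by
  classical
  have hCl := hU.1 C hC
  have hv0 : v ≠ 0 := fun h => hCl.1 (h ▸ hvC)
  have huniq : ∀ D ∈ F, v ∈ D → D = C := fun D hD hvD =>
    (unique_of_ldeg_one h1 hC hvC hD hvD).symm
  have hkey : ∀ D ∈ F, -v ∈ D → ∀ a ∈ C, -a ∈ D → a = v := fun D hD hvD a haC haD =>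
    keyclash hU hC hvC h1 hD hvD haC haD
  set Neg := F.filter (fun D => -v ∈ D) with hNeg
  set Rest := F.filter (fun D => v ∉ D ∧ -v ∉ D) with hRest
  set res := fun D : Finset ℤ => (C ∪ D) \ {v, -v} with hres
  set F2 : Cls := Rest ∪ Neg.image res with hF2
  -- basic membership facts
  have hmemNeg : ∀ D, D ∈ Neg ↔ D ∈ F ∧ -v ∈ D := fun D => Finset.mem_filter
  have hmemRest : ∀ D, D ∈ Rest ↔ D ∈ F ∧ v ∉ D ∧ -v ∉ D := fun D => Finset.mem_filter
  have hmemres : ∀ D z, z ∈ res D ↔ (z ∈ C ∨ z ∈ D) ∧ z ≠ v ∧ z ≠ -v := by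
    intro D z
    simp only [hres, Finset.mem_sdiff, Finset.mem_union, Finset.mem_insert, Finset.mem_singleton]
    tauto
  have hvnotNeg : ∀ D ∈ Neg, v ∉ D := by
    intro D hD hvD
    obtain ⟨hDF, hnvD⟩ := (hmemNeg D).mp hD
    have := huniq D hDF hvD
    rw [this] at hnvD
    exact hCl.2 v hvC hnvD
  -- res D is a clause
  have hresCl : ∀ D ∈ Neg, IsClause (res D) := by
    intro D hD
    obtain ⟨hDF, hnvD⟩ := (hmemNeg D).mp hD
    have hDl := hU.1 D hDF
    constructor
    · intro h
      rcases ((hmemres D 0).mp h).1 with h' | h'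
      · exact hCl.1 h'
      · exact hDl.1 h'
    · intro x hx hnx
      obtain ⟨hx1, hxv, hxnv⟩ := (hmemres D x).mp hx
      obtain ⟨hnx1, hnxv, hnxnv⟩ := (hmemres D (-x)).mp hnx
      rcases hx1 with h | h <;> rcases hnx1 with h' | h'
      · exact hCl.2 x h h'
      · exact hxv (hkey D hDF hnvD x h h')
      · exact hnxv (by rw [hkey D hDF hnvD (-x) h' (by rwa [neg_neg])])
      · exact hDl.2 x h h'
  -- res is injective on Neg
  have hresinj : ∀ D ∈ Neg, ∀ D' ∈ Neg, res D = res D' → D = D' := by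
    intro D hD D' hD' heq
    by_contra hne
    obtain ⟨hDF, hnvD⟩ := (hmemNeg D).mp hD
    obtain ⟨hDF', hnvD'⟩ := (hmemNeg D').mp hD'
    obtain ⟨z, hzD, hzD'⟩ := hU.2.1 D hDF D' hDF' hne
    have hzv : z ≠ v := fun h => hvnotNeg D hD (h ▸ hzD)
    have hznv : z ≠ -v := fun h => hvnotNeg D' hD' (by rw [← neg_neg v, ← h]; exact hzD')
    have h1' : z ∈ res D := (hmemres D z).mpr ⟨Or.inr hzD, hzv, hznv⟩
    have h2' : -z ∈ res D' := (hmemres D' (-z)).mpr ⟨Or.inr hzD', fun h => hznv (by linarith),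
      fun h => hzv (by linarith)⟩
    rw [heq] at h1'
    exact (hresCl D' hD').2 z h1' h2'
  -- res D is never in Rest
  have hresnotRest : ∀ D ∈ Neg, ∀ D' ∈ Rest, res D ≠ D' := by
    intro D hD D' hD' heq
    obtain ⟨hDF', hvD', hnvD'⟩ := (hmemRest D').mp hD'
    have hCD' : C ≠ D' := fun h => hvD' (h ▸ hvC)
    obtain ⟨z, hzC, hzD'⟩ := hU.2.1 C hC D' hDF' hCD'
    have hzv : z ≠ v := fun h => hnvD' (h ▸ hzD')
    have hznv : z ≠ -v := fun h => hCl.2 v hvC (h ▸ hzC)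
    have h1' : z ∈ res D := (hmemres D z).mpr ⟨Or.inl hzC, hzv, hznv⟩
    rw [heq] at h1'
    exact (hU.1 D' hDF').2 z h1' hzD'
  have hmemF2 : ∀ A, A ∈ F2 ↔ (A ∈ Rest ∨ ∃ D ∈ Neg, res D = A) := by
    intro A
    simp [hF2, Finset.mem_union, Finset.mem_image]
  -- Neg is nonempty
  have hNegne : Neg.Nonempty := by
    obtain ⟨D, hD, hvD⟩ := exists_of_ldeg_pos (nopure hU hC hvC)
    exact ⟨D, (hmemNeg D).mpr ⟨hD, hvD⟩⟩
  -- F2 is a clause-set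
  have hCS2 : IsClauseSet F2 := by
    intro A hA
    rcases (hmemF2 A).mp hA with h | ⟨D, hD, rfl⟩
    · exact hU.1 A ((hmemRest A).mp h).1
    · exact hresCl D hD
  -- F2 is hitting
  have hHit2 : Hitting F2 := by
    intro A hA B hB hAB
    rcases (hmemF2 A).mp hA with hA' | ⟨D, hD, rfl⟩ <;>
      rcases (hmemF2 B).mp hB with hB' | ⟨D', hD', rfl⟩
    · exact hU.2.1 A ((hmemRest A).mp hA').1 B ((hmemRest B).mp hB').1 hAB
    · obtain ⟨hAF, hvA, hnvA⟩ := (hmemRest A).mp hA'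
      have hAC : A ≠ C := fun h => hvA (h ▸ hvC)
      obtain ⟨z, hzA, hzC⟩ := hU.2.1 A hAF C hC hAC
      have h1' : -z ≠ v := fun h => hnvA ((show z = -v by linarith) ▸ hzA)
      have h2' : -z ≠ -v := fun h => hvA ((show z = v by linarith) ▸ hzA)
      exact ⟨z, hzA, (hmemres D' (-z)).mpr ⟨Or.inl hzC, h1', h2'⟩⟩
    · obtain ⟨hBF, hvB, hnvB⟩ := (hmemRest B).mp hB'
      have hCB : C ≠ B := fun h => hvB (h ▸ hvC)
      obtain ⟨z, hzC, hzB⟩ := hU.2.1 C hC B hBF hCB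
      have hz1 : z ≠ v := fun h => hnvB (h ▸ hzB)
      have hz2 : z ≠ -v := fun h => hCl.2 v hvC (h ▸ hzC)
      exact ⟨z, (hmemres D z).mpr ⟨Or.inl hzC, hz1, hz2⟩, hzB⟩
    · have hDD' : D ≠ D' := fun h => hAB (by rw [h])
      obtain ⟨hDF, hnvD⟩ := (hmemNeg D).mp hD
      obtain ⟨hDF', hnvD'⟩ := (hmemNeg D').mp hD'
      obtain ⟨z, hzD, hzD'⟩ := hU.2.1 D hDF D' hDF' hDD'
      have hz1 : z ≠ v := fun h => hvnotNeg D hD (h ▸ hzD)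
      have hz2 : z ≠ -v := fun h => hvnotNeg D' hD' ((show -z = v by rw [h, neg_neg]) ▸ hzD')
      exact ⟨z, (hmemres D z).mpr ⟨Or.inr hzD, hz1, hz2⟩,
        (hmemres D' (-z)).mpr ⟨Or.inr hzD', fun hh => hz2 (by linarith),
          fun hh => hz1 (by linarith)⟩⟩
  -- F2 is unsatisfiable
  have hUnsat2 : ¬ Sat F2 := by
    rintro ⟨S, hS, hhits⟩
    set S0 := (S.erase v).erase (-v) with hS0
    have hS0sub : S0 ⊆ S := (Finset.erase_subset _ _).trans (Finset.erase_subset _ _)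
    have hS0Cl : IsClause S0 := clause_subset hS hS0sub
    have hmemS0 : ∀ z, z ∈ S0 ↔ z ∈ S ∧ z ≠ v ∧ z ≠ -v := by
      intro z
      simp only [hS0, Finset.mem_erase]
      tauto
    have hhits0 : ∀ A ∈ F2, (S0 ∩ A).Nonempty := by
      intro A hA
      obtain ⟨z, hz⟩ := hhits A hA
      have hzS := (Finset.mem_inter.mp hz).1
      have hzA := (Finset.mem_inter.mp hz).2
      have hvA : v ∉ A ∧ -v ∉ A := by
        rcases (hmemF2 A).mp hA with h | ⟨D, hD, rfl⟩
        · exact ⟨((hmemRest A).mp h).2.1, ((hmemRest A).mp h).2.2⟩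
        · constructor <;> intro hc
          · exact (((hmemres D v).mp hc).2.1) rfl
          · exact (((hmemres D (-v)).mp hc).2.2) rfl
      exact ⟨z, Finset.mem_inter.mpr ⟨(hmemS0 z).mpr ⟨hzS, fun h => hvA.1 (h ▸ hzA),
        fun h => hvA.2 (h ▸ hzA)⟩, hzA⟩⟩
    have hvS0 : v ∉ S0 := fun h => ((hmemS0 v).mp h).2.1 rfl
    have hnvS0 : -v ∉ S0 := fun h => ((hmemS0 (-v)).mp h).2.2 rfl
    by_cases hcase : (S0 ∩ C).Nonempty
    · apply hU.2.2
      refine ⟨insert (-v) S0, ⟨?_, ?_⟩, ?_⟩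
      · intro h
        rcases Finset.mem_insert.mp h with h | h
        · exact hv0 (by linarith)
        · exact hS0Cl.1 h
      · intro x hx hnx
        rcases Finset.mem_insert.mp hx with h | h <;> rcases Finset.mem_insert.mp hnx with h' | h'
        · subst h; exact hv0 (by linarith)
        · subst h; rw [neg_neg] at h'; exact hvS0 h'
        · have : x = v := by linarith
          exact hvS0 (this ▸ h)
        · exact hS0Cl.2 x h h'
      · intro D hD
        by_cases h : v ∈ D
        · have hDC : D = C := huniq D hD h
          obtain ⟨z, hz⟩ := hcase
          exact ⟨z, Finset.mem_inter.mpr ⟨Finset.mem_insert_of_mem (Finset.mem_inter.mp hz).1,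
            hDC ▸ (Finset.mem_inter.mp hz).2⟩⟩
        · by_cases h' : -v ∈ D
          · exact ⟨-v, Finset.mem_inter.mpr ⟨Finset.mem_insert_self _ _, h'⟩⟩
          · have hDR : D ∈ Rest := (hmemRest D).mpr ⟨hD, h, h'⟩
            obtain ⟨z, hz⟩ := hhits0 D (Finset.mem_union_left _ hDR)
            exact ⟨z, Finset.mem_inter.mpr ⟨Finset.mem_insert_of_mem (Finset.mem_inter.mp hz).1,
              (Finset.mem_inter.mp hz).2⟩⟩
    · apply hU.2.2
      refine ⟨insert v S0, ⟨?_, ?_⟩, ?_⟩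
      · intro h
        rcases Finset.mem_insert.mp h with h | h
        · exact hv0 h.symm
        · exact hS0Cl.1 h
      · intro x hx hnx
        rcases Finset.mem_insert.mp hx with h | h <;> rcases Finset.mem_insert.mp hnx with h' | h'
        · subst h; exact hv0 (by linarith)
        · subst h; exact hnvS0 h'
        · have : x = -v := by linarith
          exact hnvS0 (this ▸ h)
        · exact hS0Cl.2 x h h'
      · intro D hD
        by_cases h : v ∈ D
        · exact ⟨v, Finset.mem_inter.mpr ⟨Finset.mem_insert_self _ _, h⟩⟩
        · by_cases h' : -v ∈ D
          · have hDNeg : D ∈ Neg := (hmemNeg D).mpr ⟨hD, h'⟩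
            have hres2 : res D ∈ F2 := (hmemF2 (res D)).mpr (Or.inr ⟨D, hDNeg, rfl⟩)
            obtain ⟨z, hz⟩ := hhits0 (res D) hres2
            have hz1 := (Finset.mem_inter.mp hz).1
            have hz2 := (Finset.mem_inter.mp hz).2
            rcases ((hmemres D z).mp hz2).1 with hzC | hzD
            · exact absurd ⟨z, Finset.mem_inter.mpr ⟨hz1, hzC⟩⟩ hcase
            · exact ⟨z, Finset.mem_inter.mpr ⟨Finset.mem_insert_of_mem hz1, hzD⟩⟩
          · have hDR : D ∈ Rest := (hmemRest D).mpr ⟨hD, h, h'⟩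
            obtain ⟨z, hz⟩ := hhits0 D (Finset.mem_union_left _ hDR)
            exact ⟨z, Finset.mem_inter.mpr ⟨Finset.mem_insert_of_mem (Finset.mem_inter.mp hz).1,
              (Finset.mem_inter.mp hz).2⟩⟩
  -- cvar F2 = (cvar F).erase |v|
  have hcvar : cvar F2 = (cvar F).erase |v| := by
    apply Finset.ext
    intro w
    simp only [Finset.mem_erase]
    constructor
    · intro hw
      obtain ⟨A, hA, z, hzA, rfl⟩ := mem_cvar_iff.mp hw
      have hzne : z ≠ v ∧ z ≠ -v := by
        rcases (hmemF2 A).mp hA with h | ⟨D, hD, rfl⟩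
        · obtain ⟨hAF, hvA, hnvA⟩ := (hmemRest A).mp h
          exact ⟨fun hh => hvA (hh ▸ hzA), fun hh => hnvA (hh ▸ hzA)⟩
        · exact ((hmemres D z).mp hzA).2
      refine ⟨?_, ?_⟩
      · intro habs
        rcases abs_eq_abs.mp habs with h | h
        · exact hzne.1 h
        · exact hzne.2 h
      · rcases (hmemF2 A).mp hA with h | ⟨D, hD, rfl⟩
        · exact abs_mem_cvar ((hmemRest A).mp h).1 hzA
        · rcases ((hmemres D z).mp hzA).1 with h' | h'
          · exact abs_mem_cvar hC h'
          · exact abs_mem_cvar ((hmemNeg D).mp hD).1 h'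
    · rintro ⟨hne, hw⟩
      obtain ⟨A, hA, z, hzA, rfl⟩ := mem_cvar_iff.mp hw
      have hz1 : z ≠ v := fun h => hne (by rw [h])
      have hz2 : z ≠ -v := fun h => hne (by rw [h, abs_neg])
      by_cases h : v ∈ A
      · have hAC : A = C := huniq A hA h
        obtain ⟨D, hD⟩ := hNegne
        have hzres : z ∈ res D := (hmemres D z).mpr ⟨Or.inl (hAC ▸ hzA), hz1, hz2⟩
        exact abs_mem_cvar ((hmemF2 (res D)).mpr (Or.inr ⟨D, hD, rfl⟩)) hzres
      · by_cases h' : -v ∈ A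
        · have hANeg : A ∈ Neg := (hmemNeg A).mpr ⟨hA, h'⟩
          have hzres : z ∈ res A := (hmemres A z).mpr ⟨Or.inr hzA, hz1, hz2⟩
          exact abs_mem_cvar ((hmemF2 (res A)).mpr (Or.inr ⟨A, hANeg, rfl⟩)) hzres
        · exact abs_mem_cvar (Finset.mem_union_left _ ((hmemRest A).mpr ⟨hA, h, h'⟩)) hzA
  -- cardinality
  have hdisj : Disjoint Rest (Neg.image res) := by
    rw [Finset.disjoint_left]
    intro A hA hA'
    obtain ⟨D, hD, hDA⟩ := Finset.mem_image.mp hA'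
    exact hresnotRest D hD A hA hDA
  have hinjOn : Set.InjOn res ↑Neg := fun a ha b hb h => hresinj a ha b hb h
  have hcard2 : F2.card = Rest.card + Neg.card := by
    rw [hF2, Finset.card_union_of_disjoint hdisj, Finset.card_image_of_injOn hinjOn]
  have hNegRest : ∀ D ∈ F, -v ∈ D → v ∉ D := by
    intro D hD h' h
    have := huniq D hD h
    rw [this] at h'
    exact hCl.2 v hvC h'
  have hcardF : F.card = 1 + (Neg.card + Rest.card) := by
    have e3 := Finset.card_filter_add_card_filter_not (s := F) (p := fun D => v ∈ D)
    have e2 := Finset.card_filter_add_card_filter_not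
      (s := F.filter (fun D => v ∉ D)) (p := fun D => -v ∈ D)
    have eNeg : (F.filter (fun D => v ∉ D)).filter (fun D => -v ∈ D) = Neg := by
      apply Finset.ext
      intro D
      simp only [Finset.mem_filter, hNeg]
      constructor
      · rintro ⟨⟨hD, _⟩, h2⟩; exact ⟨hD, h2⟩
      · rintro ⟨hD, h2⟩; exact ⟨⟨hD, hNegRest D hD h2⟩, h2⟩
    have eRest : (F.filter (fun D => v ∉ D)).filter (fun D => ¬ -v ∈ D) = Rest := by
      apply Finset.ext
      intro D
      simp only [Finset.mem_filter, hRest]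
      tauto
    have e1 : (F.filter (fun D => v ∈ D)).card = 1 := h1
    rw [eNeg, eRest] at e2
    have e4 : (F.filter (fun D => ¬ v ∈ D)).card = Neg.card + Rest.card := by
      rw [← e2]
    omega
  have hcard : F2.card + 1 = F.card := by omega
  -- degree bounds
  have hbound1 : ∀ a, a ≠ v → a ≠ -v → a ∈ C → ldeg F (-v) ≤ ldeg F2 a := by
    intro a hav hanv haC
    have hN : ldeg F (-v) = Neg.card := rfl
    rw [hN]
    apply Finset.card_le_card_of_injOn res
    · intro D hD
      refine Finset.mem_filter.mpr ⟨(hmemF2 (res D)).mpr (Or.inr ⟨D, hD, rfl⟩), ?_⟩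
      exact (hmemres D a).mpr ⟨Or.inl haC, hav, hanv⟩
    · exact fun x hx y hy h => hresinj x hx y hy h
  have hbound2 : ∀ a, a ≠ -v → a ∉ C → ldeg F a ≤ ldeg F2 a := by
    intro a hanv haC
    have hav : a ≠ v := fun h => haC (h ▸ hvC)
    apply Finset.card_le_card_of_injOn (fun D => if -v ∈ D then res D else D)
    · intro D hD
      obtain ⟨hDF, haD⟩ := Finset.mem_filter.mp hD
      have hvD : v ∉ D := fun h => haC (by rw [← huniq D hDF h]; exact haD)
      by_cases h' : -v ∈ D
      · simp only [if_pos h']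
        have hDNeg : D ∈ Neg := (hmemNeg D).mpr ⟨hDF, h'⟩
        refine Finset.mem_filter.mpr ⟨(hmemF2 (res D)).mpr (Or.inr ⟨D, hDNeg, rfl⟩), ?_⟩
        exact (hmemres D a).mpr ⟨Or.inr haD, hav, hanv⟩
      · simp only [if_neg h']
        exact Finset.mem_filter.mpr ⟨Finset.mem_union_left _ ((hmemRest D).mpr ⟨hDF, hvD, h'⟩), haD⟩
    · intro x hx y hy hxy
      simp only [Finset.coe_filter, Set.mem_setOf_eq] at hx hy
      obtain ⟨hxF, hax⟩ := hx
      obtain ⟨hyF, hay⟩ := hy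
      change (if -v ∈ x then res x else x) = (if -v ∈ y then res y else y) at hxy
      have hvx : v ∉ x := fun h => haC (by rw [← huniq x hxF h]; exact hax)
      have hvy : v ∉ y := fun h => haC (by rw [← huniq y hyF h]; exact hay)
      by_cases h1' : -v ∈ x <;> by_cases h2' : -v ∈ y
      · rw [if_pos h1', if_pos h2'] at hxy
        exact hresinj x ((hmemNeg x).mpr ⟨hxF, h1'⟩) y ((hmemNeg y).mpr ⟨hyF, h2'⟩) hxy
      · rw [if_pos h1', if_neg h2'] at hxy
        exact absurd hxy (hresnotRest x ((hmemNeg x).mpr ⟨hxF, h1'⟩) y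
          ((hmemRest y).mpr ⟨hyF, hvy, h2'⟩))
      · rw [if_neg h1', if_pos h2'] at hxy
        exact absurd hxy.symm (hresnotRest y ((hmemNeg y).mpr ⟨hyF, h2'⟩) x
          ((hmemRest x).mpr ⟨hxF, hvx, h1'⟩))
      · rwa [if_neg h1', if_neg h2'] at hxy
  refine ⟨F2, ⟨hCS2, hHit2, hUnsat2⟩, hcvar, hcard, hbound1, hbound2, ?_⟩
  intro D hD hnvD
  exact (hmemF2 _).mpr (Or.inr ⟨D, (hmemNeg D).mpr ⟨hD, hnvD⟩, rfl⟩)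

/-- One singular-DP step: if all singular variables other than `x'` have their degree-1
literal in a common clause `W` (non-1-singularly), one step reaches a UHIT whose only
possible singular variable is `x'`. -/
lemma step_almost (F : Cls) (hU : UHit F) (x' : ℤ) (W : Finset ℤ) (hW : W ∈ F)
    (halmost : ∀ u, SingularVar F u → u ≠ x' →
      ∃ b, |b| = u ∧ ldeg F b = 1 ∧ b ∈ W ∧ 2 ≤ ldeg F (-b)) :
    ∃ F1 : Cls, UHit F1 ∧ (∀ u, SingularVar F1 u → u = x') ∧
      deficiency F1 = deficiency F ∧ nvar F ≤ nvar F1 + 1 := by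
  by_cases hex : ∃ u, SingularVar F u ∧ u ≠ x'
  · obtain ⟨u0, hu0, hu0x⟩ := hex
    obtain ⟨b, hb_abs, hb1, hbW, hbm⟩ := halmost u0 hu0 hu0x
    obtain ⟨F1, hU1, hcv1, hcard1, hbound1, hbound2, _⟩ := sdp F hU b W hW hbW hb1
    have hbcv : |b| ∈ cvar F := abs_mem_cvar hW hbW
    have hnv : nvar F1 + 1 = nvar F := by
      rw [nvar, nvar, hcv1, Finset.card_erase_add_one hbcv]
    refine ⟨F1, hU1, ?_, ?_, by omega⟩
    · intro u hu
      by_contra hux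
      have hucv : u ∈ cvar F1 := hu.1
      rw [hcv1, Finset.mem_erase] at hucv
      obtain ⟨hub, hucvF⟩ := hucv
      have hupos : 0 < u := cvar_pos hU1.1 hu.1
      have key : ∀ a : ℤ, |a| = u → 2 ≤ ldeg F1 a := by
        intro a ha
        have hab : a ≠ b := fun h => hub (by rw [← ha, h])
        have hanb : a ≠ -b := fun h => hub (by rw [← ha, h, abs_neg])
        by_cases haW : a ∈ W
        · exact le_trans hbm (hbound1 a hab hanb haW)
        · refine le_trans ?_ (hbound2 a hanb haW)
          by_cases hsing : SingularVar F u
          · obtain ⟨b', habs', h1', hbW', hm'⟩ := halmost u hsing hux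
            rcases abs_eq_abs.mp (ha.trans habs'.symm) with h | h
            · exact absurd (h ▸ hbW') haW
            · rw [h]
              exact hm'
          · have : ¬ SingularVar F |a| := ha ▸ hsing
            exact (nonsing_two hU this (ha ▸ hucvF)).1
      have k1 : 2 ≤ ldeg F1 u := key u (abs_of_pos hupos)
      have k2 : 2 ≤ ldeg F1 (-u) := key (-u) (by rw [abs_neg]; exact abs_of_pos hupos)
      have := le_min k1 k2
      rw [hu.2] at this
      omega
    · have h1' : (F1.card : ℤ) + 1 = F.card := by exact_mod_cast hcard1
      have h2' : (nvar F1 : ℤ) + 1 = nvar F := by exact_mod_cast hnv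
      unfold deficiency
      omega
  · push_neg at hex
    exact ⟨F, hU, fun u hu => by_contra fun h => absurd (hex u) (by simp [hu, h]),
      rfl, Nat.le_succ _⟩

lemma cvar_mono {F G : Cls} (h : F ⊆ G) : cvar F ⊆ cvar G := by
  intro w hw
  obtain ⟨C, hC, z, hz, rfl⟩ := mem_cvar_iff.mp hw
  exact mem_cvar_iff.mpr ⟨C, h hC, z, hz, rfl⟩

/-- Replacing a strict fs-pair by its resolvent. -/
lemma fsres (F : Cls) (hU : UHit F) (hns : Nonsingular F) (E : Finset ℤ) (x : ℤ)
    (hE : IsClause E) (hx0 : x ≠ 0) (hxE : x ∉ E) (hnxE : -x ∉ E)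
    (h1 : insert x E ∈ F) (h2 : insert (-x) E ∈ F) (h3 : E ∉ F)
    (h4 : |x| ∈ cvar (F \ {insert x E, insert (-x) E})) :
    ∃ F' : Cls, UHit F' ∧ cvar F' = cvar F ∧ F'.card + 1 = F.card ∧ E ∈ F' ∧
      (∀ u, SingularVar F' u → u ≠ |x| →
        ∃ b, |b| = u ∧ ldeg F' b = 1 ∧ b ∈ E ∧ 2 ≤ ldeg F' (-b)) := by
  classical
  set Cx := insert x E with hCx
  set Cnx := insert (-x) E with hCnx
  set P : Cls := {Cx, Cnx} with hP
  set F' : Cls := insert E (F \ P) with hF'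
  have hxnx : x ≠ -x := fun h => hx0 (by linarith)
  have hCxCnx : Cx ≠ Cnx := by
    intro h
    have : x ∈ Cnx := h ▸ Finset.mem_insert_self x E
    rcases Finset.mem_insert.mp this with h' | h'
    · exact hxnx h'
    · exact hxE h'
  have hmemF' : ∀ A, A ∈ F' ↔ A = E ∨ (A ∈ F ∧ A ≠ Cx ∧ A ≠ Cnx) := by
    intro A
    simp only [hF', Finset.mem_insert, Finset.mem_sdiff, hP, Finset.mem_insert,
      Finset.mem_singleton]
    tauto
  have hEF' : E ∈ F' := Finset.mem_insert_self _ _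
  have hsubF' : F \ P ⊆ F' := Finset.subset_insert _ _
  -- clause-set
  have hCS : IsClauseSet F' := by
    intro A hA
    rcases (hmemF' A).mp hA with rfl | ⟨hAF, _, _⟩
    · exact hE
    · exact hU.1 A hAF
  -- hitting
  have hHit : Hitting F' := by
    intro A hA B hB hAB
    rcases (hmemF' A).mp hA with rfl | ⟨hAF, hACx, hACnx⟩ <;>
      rcases (hmemF' B).mp hB with rfl | ⟨hBF, hBCx, hBCnx⟩
    · exact absurd rfl hAB
    · obtain ⟨z1, hz1, hz1B⟩ := hU.2.1 Cx h1 B hBF (Ne.symm hBCx)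
      obtain ⟨z2, hz2, hz2B⟩ := hU.2.1 Cnx h2 B hBF (Ne.symm hBCnx)
      rcases Finset.mem_insert.mp hz1 with h1' | hz1E
      · rcases Finset.mem_insert.mp hz2 with h2' | hz2E
        · rw [h1'] at hz1B
          rw [h2', neg_neg] at hz2B
          exact absurd hz1B ((hU.1 B hBF).2 x hz2B)
        · exact ⟨z2, hz2E, hz2B⟩
      · exact ⟨z1, hz1E, hz1B⟩
    · obtain ⟨z1, hz1A, hz1⟩ := hU.2.1 A hAF Cx h1 hACx
      rcases Finset.mem_insert.mp hz1 with h' | hz1E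
      · obtain ⟨z2, hz2A, hz2⟩ := hU.2.1 A hAF Cnx h2 hACnx
        rcases Finset.mem_insert.mp hz2 with h'' | hz2E
        · have hz1x : z1 = -x := by linarith
          have hz2x : z2 = x := by linarith
          exact absurd (hz1x ▸ hz1A) ((hU.1 A hAF).2 x (hz2x ▸ hz2A))
        · exact ⟨z2, hz2A, hz2E⟩
      · exact ⟨z1, hz1A, hz1E⟩
    · exact hU.2.1 A hAF B hBF hAB
  -- unsat
  have hUnsat : ¬ Sat F' := by
    rintro ⟨S, hS, hhits⟩
    apply hU.2.2
    refine ⟨S, hS, ?_⟩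
    intro D hD
    by_cases hDCx : D = Cx
    · obtain ⟨z, hz⟩ := hhits E hEF'
      exact ⟨z, Finset.mem_inter.mpr ⟨(Finset.mem_inter.mp hz).1,
        hDCx ▸ Finset.mem_insert_of_mem (Finset.mem_inter.mp hz).2⟩⟩
    · by_cases hDCnx : D = Cnx
      · obtain ⟨z, hz⟩ := hhits E hEF'
        exact ⟨z, Finset.mem_inter.mpr ⟨(Finset.mem_inter.mp hz).1,
          hDCnx ▸ Finset.mem_insert_of_mem (Finset.mem_inter.mp hz).2⟩⟩
      · exact hhits D ((hmemF' D).mpr (Or.inr ⟨hD, hDCx, hDCnx⟩))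
  have hU' : UHit F' := ⟨hCS, hHit, hUnsat⟩
  -- cvar
  have hcvar : cvar F' = cvar F := by
    apply Finset.Subset.antisymm
    · intro w hw
      obtain ⟨A, hA, z, hz, rfl⟩ := mem_cvar_iff.mp hw
      rcases (hmemF' A).mp hA with rfl | ⟨hAF, _, _⟩
      · exact abs_mem_cvar h1 (Finset.mem_insert_of_mem hz)
      · exact abs_mem_cvar hAF hz
    · intro w hw
      obtain ⟨A, hA, z, hz, rfl⟩ := mem_cvar_iff.mp hw
      by_cases hACx : A = Cx
      · subst hACx
        rcases Finset.mem_insert.mp hz with rfl | hzE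
        · exact cvar_mono hsubF' h4
        · exact abs_mem_cvar hEF' hzE
      · by_cases hACnx : A = Cnx
        · subst hACnx
          rcases Finset.mem_insert.mp hz with rfl | hzE
          · rw [abs_neg]
            exact cvar_mono hsubF' h4
          · exact abs_mem_cvar hEF' hzE
        · exact abs_mem_cvar ((hmemF' A).mpr (Or.inr ⟨hA, hACx, hACnx⟩)) hz
  -- card
  have hPF : P ⊆ F := by
    intro A hA
    rcases Finset.mem_insert.mp hA with rfl | hA'
    · exact h1
    · rw [Finset.mem_singleton.mp hA']
      exact h2
  have hcardP : P.card = 2 := by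
    rw [hP, Finset.card_insert_of_notMem (by simpa using hCxCnx), Finset.card_singleton]
  have hcard : F'.card + 1 = F.card := by
    have hEnot : E ∉ F \ P := fun h => h3 (Finset.mem_sdiff.mp h).1
    have e1 : F'.card = (F \ P).card + 1 := Finset.card_insert_of_notMem hEnot
    have e2 : (F \ P).card = F.card - P.card := Finset.card_sdiff_of_subset hPF
    have e3 : P.card ≤ F.card := Finset.card_le_card hPF
    omega
  -- degree equality for untouched literals
  have hldeq : ∀ z : ℤ, z ∉ E → z ≠ x → z ≠ -x → ldeg F' z = ldeg F z := by
    intro z hzE hzx hznx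
    unfold ldeg
    congr 1
    apply Finset.ext
    intro D
    simp only [Finset.mem_filter]
    constructor
    · rintro ⟨hD, hzD⟩
      rcases (hmemF' D).mp hD with rfl | ⟨hDF, _, _⟩
      · exact absurd hzD hzE
      · exact ⟨hDF, hzD⟩
    · rintro ⟨hD, hzD⟩
      have hDCx : D ≠ Cx := by
        rintro rfl
        rcases Finset.mem_insert.mp hzD with h | h
        · exact hzx h
        · exact hzE h
      have hDCnx : D ≠ Cnx := by
        rintro rfl
        rcases Finset.mem_insert.mp hzD with h | h
        · exact hznx h
        · exact hzE h
      exact ⟨(hmemF' D).mpr (Or.inr ⟨hD, hDCx, hDCnx⟩), hzD⟩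
  refine ⟨F', hU', hcvar, hcard, hEF', ?_⟩
  intro u hu hux
  have hupos : 0 < u := cvar_pos hU'.1 hu.1
  have hone : ldeg F' u = 1 ∨ ldeg F' (-u) = 1 := by
    rcases min_cases (ldeg F' u) (ldeg F' (-u)) with ⟨h, _⟩ | ⟨h, _⟩
    · exact Or.inl (by rw [← h, hu.2])
    · exact Or.inr (by rw [← h, hu.2])
  have hucvF : u ∈ cvar F := hcvar ▸ hu.1
  have main : ∀ b : ℤ, |b| = u → ldeg F' b = 1 →
      ∃ b', |b'| = u ∧ ldeg F' b' = 1 ∧ b' ∈ E ∧ 2 ≤ ldeg F' (-b') := by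
    intro b hb hb1
    have hbx : b ≠ x := fun h => hux (by rw [← hb, h])
    have hbnx : b ≠ -x := fun h => hux (by rw [← hb, h, abs_neg])
    have hns2 := nonsing_two hU (hns |b|) (show |b| ∈ cvar F by rw [hb]; exact hucvF)
    have hbE : b ∈ E := by
      by_contra hbE
      rw [hldeq b hbE hbx hbnx] at hb1
      omega
    have hnbE : -b ∉ E := hE.2 b hbE
    have hnbx : -b ≠ x := fun h => hux (by rw [← hb, show b = -x by linarith, abs_neg])
    have hnbnx : -b ≠ -x := fun h => hux (by rw [← hb, show b = x by linarith])
    refine ⟨b, hb, hb1, hbE, ?_⟩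
    rw [hldeq (-b) hnbE hnbx hnbnx]
    exact hns2.2
  rcases hone with h | h
  · exact main u (abs_of_pos hupos) h
  · exact main (-u) (by rw [abs_neg]; exact abs_of_pos hupos) h

lemma def_step {F1 F2 : Cls} {w : ℤ} (hcard : F2.card + 1 = F1.card)
    (hcv : cvar F2 = (cvar F1).erase w) (hw : w ∈ cvar F1) :
    deficiency F2 = deficiency F1 ∧ nvar F2 + 1 = nvar F1 := by
  have hnv : nvar F2 + 1 = nvar F1 := by
    rw [nvar, nvar, hcv, Finset.card_erase_add_one hw]
  refine ⟨?_, hnv⟩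
  have e1 : (F2.card : ℤ) + 1 = F1.card := by exact_mod_cast hcard
  have e2 : (nvar F2 : ℤ) + 1 = nvar F1 := by exact_mod_cast hnv
  unfold deficiency
  omega


/-- If a nonsingular UHIT `F` with deficiency `k ≥ 2` is strictly fs-resolvable, and all
nonsingular UHITs of deficiency `k - 1` have at most `N` variables, then `n(F) ≤ N + 3`. -/
theorem stmt2 (F : Cls) (k : ℤ) (hk : 2 ≤ k) (hU : UHit F) (hns : Nonsingular F)
    (hδ : deficiency F = k) (hfs : StrictlyFsResolvable F) (N : ℕ)
    (hN : ∀ G : Cls, UHit G → Nonsingular G → deficiency G = k - 1 → nvar G ≤ N) :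
    nvar F ≤ N + 3 := by
  classical
  obtain ⟨E, x, hE, hx0, hxE, hnxE, h1, h2, h3, h4⟩ := hfs
  obtain ⟨F', hU', hcv', hcard', hEF', halmost'⟩ :=
    fsres F hU hns E x hE hx0 hxE hnxE h1 h2 h3 h4
  have hnv' : nvar F' = nvar F := by rw [nvar, nvar, hcv']
  have hδ' : deficiency F' = k - 1 := by
    have e1 : (F'.card : ℤ) + 1 = F.card := by exact_mod_cast hcard'
    have e2 : (nvar F' : ℤ) = nvar F := by exact_mod_cast hnv'
    unfold deficiency at hδ ⊢
    omega
  -- Step A: collapse all singular variables other than |x|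
  obtain ⟨F1, hU1, hsing1, hδ1, hn1⟩ := step_almost F' hU' |x| E hEF' halmost'
  have hδ1' : deficiency F1 = k - 1 := by rw [hδ1, hδ']
  by_cases hns1 : Nonsingular F1
  · have hfin := hN F1 hU1 hns1 hδ1'
    omega
  · simp only [Nonsingular, not_forall, not_not] at hns1
    obtain ⟨u, hu⟩ := hns1
    have hux : u = |x| := hsing1 u hu
    have hupos : 0 < u := cvar_pos hU1.1 hu.1
    have hone : ldeg F1 u = 1 ∨ ldeg F1 (-u) = 1 := by
      rcases min_cases (ldeg F1 u) (ldeg F1 (-u)) with ⟨h, _⟩ | ⟨h, _⟩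
      · exact Or.inl (by rw [← h, hu.2])
      · exact Or.inr (by rw [← h, hu.2])
    obtain ⟨l, habsl, hl1⟩ : ∃ l : ℤ, |l| = u ∧ ldeg F1 l = 1 := by
      rcases hone with h | h
      · exact ⟨u, abs_of_pos hupos, h⟩
      · exact ⟨-u, by rw [abs_neg]; exact abs_of_pos hupos, h⟩
    obtain ⟨C1, hC1F, hlC1⟩ := exists_of_ldeg_pos (le_of_eq hl1.symm)
    have hlcv : |l| ∈ cvar F1 := abs_mem_cvar hC1F hlC1
    have hm1 : 1 ≤ ldeg F1 (-l) := nopure hU1 hC1F hlC1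
    -- non-singularity of other variables of F1
    have hothers : ∀ u', u' ≠ |l| → u' ∈ cvar F1 → ¬ SingularVar F1 u' := by
      intro u' hu'l hu'cv hs
      exact hu'l (by rw [hsing1 u' hs, ← hux, ← habsl])
    obtain ⟨F2, hU2, hcv2, hcard2, hb1, hb2, hres⟩ := sdp F1 hU1 l C1 hC1F hlC1 hl1
    obtain ⟨hδ2, hnv2⟩ := def_step hcard2 hcv2 hlcv
    have hδ2' : deficiency F2 = k - 1 := by rw [hδ2, hδ1']
    by_cases hm : 2 ≤ ldeg F1 (-l)
    · -- non-1-singular: result is nonsingular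
      have hns2 : Nonsingular F2 := by
        intro u' hu'
        have hu'cv : u' ∈ cvar F2 := hu'.1
        rw [hcv2, Finset.mem_erase] at hu'cv
        obtain ⟨hu'l, hu'cvF1⟩ := hu'cv
        have hu'pos : 0 < u' := cvar_pos hU2.1 hu'.1
        have key : ∀ a : ℤ, |a| = u' → 2 ≤ ldeg F2 a := by
          intro a ha
          have hab : a ≠ l := fun h => hu'l (by rw [← ha, h])
          have hanb : a ≠ -l := fun h => hu'l (by rw [← ha, h, abs_neg])
          have hnsa : ¬ SingularVar F1 u' := hothers u' hu'l hu'cvF1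
          have h2a := nonsing_two hU1 (show ¬ SingularVar F1 |a| by rw [ha]; exact hnsa)
            (by rw [ha]; exact hu'cvF1)
          by_cases haC : a ∈ C1
          · exact le_trans hm (hb1 a hab hanb haC)
          · exact le_trans h2a.1 (hb2 a hanb haC)
        have k1 : 2 ≤ ldeg F2 u' := key u' (abs_of_pos hu'pos)
        have k2 : 2 ≤ ldeg F2 (-u') := key (-u') (by rw [abs_neg]; exact abs_of_pos hu'pos)
        have := le_min k1 k2
        rw [hu'.2] at this
        omega
      have hfin := hN F2 hU2 hns2 hδ2'
      omega
    · -- 1-singular merge; new singulars live in the resolvent R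
      have hm1' : ldeg F1 (-l) = 1 := by omega
      obtain ⟨D1, hD1F, hnlD1⟩ := exists_of_ldeg_pos (le_of_eq hm1'.symm)
      set R := (C1 ∪ D1) \ {l, -l} with hRdef
      have hR : R ∈ F2 := hres D1 hD1F hnlD1
      have hmemR : ∀ z : ℤ, z ∈ R ↔ (z ∈ C1 ∨ z ∈ D1) ∧ z ≠ l ∧ z ≠ -l := by
        intro z
        simp only [hRdef, Finset.mem_sdiff, Finset.mem_union, Finset.mem_insert,
          Finset.mem_singleton]
        tauto
      have halmost2 : ∀ u', SingularVar F2 u' → u' ≠ 0 →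
          ∃ b, |b| = u' ∧ ldeg F2 b = 1 ∧ b ∈ R ∧ 2 ≤ ldeg F2 (-b) := by
        intro u' hu' _
        have hu'cv : u' ∈ cvar F2 := hu'.1
        rw [hcv2, Finset.mem_erase] at hu'cv
        obtain ⟨hu'l, hu'cvF1⟩ := hu'cv
        have hu'pos : 0 < u' := cvar_pos hU2.1 hu'.1
        have hone2 : ldeg F2 u' = 1 ∨ ldeg F2 (-u') = 1 := by
          rcases min_cases (ldeg F2 u') (ldeg F2 (-u')) with ⟨h, _⟩ | ⟨h, _⟩
          · exact Or.inl (by rw [← h, hu'.2])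
          · exact Or.inr (by rw [← h, hu'.2])
        obtain ⟨b, habsb, hb1'⟩ : ∃ b : ℤ, |b| = u' ∧ ldeg F2 b = 1 := by
          rcases hone2 with h | h
          · exact ⟨u', abs_of_pos hu'pos, h⟩
          · exact ⟨-u', by rw [abs_neg]; exact abs_of_pos hu'pos, h⟩
        have hbl : b ≠ l := fun h => hu'l (by rw [← habsb, h])
        have hbnl : b ≠ -l := fun h => hu'l (by rw [← habsb, h, abs_neg])
        have hnsb : ¬ SingularVar F1 u' := hothers u' hu'l hu'cvF1
        have h2b := nonsing_two hU1 (show ¬ SingularVar F1 |b| by rw [habsb]; exact hnsb)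
          (by rw [habsb]; exact hu'cvF1)
        have hbC1 : b ∈ C1 := by
          by_contra hbC
          have := le_trans h2b.1 (hb2 b hbnl hbC)
          omega
        have hbR : b ∈ R := (hmemR b).mpr ⟨Or.inl hbC1, hbl, hbnl⟩
        have hnbC1 : -b ∉ C1 := (hU1.1 C1 hC1F).2 b hbC1
        have hnbnl : -b ≠ -l := fun h => hbl (by linarith)
        have h2nb : 2 ≤ ldeg F2 (-b) := le_trans h2b.2 (hb2 (-b) hnbnl hnbC1)
        exact ⟨b, habsb, hb1', hbR, h2nb⟩
      obtain ⟨F3, hU3, hsing3, hδ3, hn3⟩ := step_almost F2 hU2 0 R hR halmost2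
      have hns3 : Nonsingular F3 := by
        intro u' hu'
        have h0 := hsing3 u' hu'
        have := cvar_pos hU3.1 hu'.1
        omega
      have hδ3' : deficiency F3 = k - 1 := by rw [hδ3, hδ2']
      have hfin := hN F3 hU3 hns3 hδ3'
      omega
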